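/- Let A be a C*-algebra, let a be a positive element of A, and suppose there exists a projection p in A with p ∼ a (Cuntz equivalence). Then there exists ε > 0 such that (a − ε)₊ ∼ a. -/

import Mathlib

/-- An element commuting with a selfadjoint element `b` commutes with `cfc f b`. -/
lemma commute_cfc_aux {B : Type*} [CStarAlgebra B] {x b : B}
    (hxb : Commute x b) (f : ℝ → ℝ) : Commute x (cfc f b) := by
  refine cfc_cases (fun y => Commute x y) b f (Commute.zero_right x) fun hf hb' => ?_
  have key : ∀ g : C(spectrum ℝ b, ℝ), Commute x (cfcHom hb' g) := by
    intro g
    induction g using ContinuousMap.induction_on with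
    | const r =>
      have : (ContinuousMap.const (spectrum ℝ b) r) = algebraMap ℝ C(spectrum ℝ b, ℝ) r := rfl
      rw [this, AlgHomClass.commutes]
      exact Algebra.commute_algebraMap_right r x
    | id => rw [cfcHom_id hb']; exact hxb
    | star_id => rw [star_trivial, cfcHom_id hb']; exact hxb
    | add f g hfc hgc => rw [map_add]; exact hfc.add_right hgc
    | mul f g hfc hgc => rw [map_mul]; exact hfc.mul_right hgc
    | closure h g =>
      have hcl : IsClosed {g : C(spectrum ℝ b, ℝ) | Commute x (cfcHom hb' g)} := by
        simp only [Commute, SemiconjBy]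
        exact isClosed_eq ((continuous_mul_left x).comp (cfcHom_continuous hb'))
          ((continuous_mul_right x).comp (cfcHom_continuous hb'))
      have hdense := polynomialFunctions.starClosure_topologicalClosure (𝕜 := ℝ) (spectrum ℝ b)
      have : g ∈ (polynomialFunctions (spectrum ℝ b)).starClosure.topologicalClosure := by
        rw [hdense]; trivial
      exact hcl.closure_subset_iff.mpr h this
  exact key _

/-- If a conjugate `c * b * star c` of a selfadjoint element `b` is within distance `< 1` of a
projection `p`, then `p` is exactly a conjugate of `b`. -/
lemma cornerL {A : Type*} [NonUnitalCStarAlgebra A] (p b c : A)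
    (hp_sa : IsSelfAdjoint p) (hp_idem : IsIdempotentElem p) (hb : IsSelfAdjoint b)
    (hx : ‖c * b * star c - p‖ < 1) : ∃ v : A, v * b * star v = p := by
  set x := c * b * star c with hxdef
  have hx_sa : IsSelfAdjoint x := by
    rw [IsSelfAdjoint, hxdef]; simp [star_mul, hb.star_eq, mul_assoc]
  set y := p * x * p with hydef
  have hy_sa : IsSelfAdjoint y := by
    rw [IsSelfAdjoint, hydef]; simp [star_mul, hx_sa.star_eq, hp_sa.star_eq, mul_assoc]
  have hyp : p * y = y := by rw [hydef, ← mul_assoc, ← mul_assoc, hp_idem.eq]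
  have hpy : y * p = y := by rw [hydef, mul_assoc, hp_idem.eq]
  have hpnorm : ‖p‖ ≤ 1 := by
    have h2 : ‖p‖ * ‖p‖ = ‖p‖ := by
      rw [← CStarRing.norm_star_mul_self, hp_sa.star_eq]
      exact congrArg norm hp_idem.eq
    nlinarith [norm_nonneg p]
  have hnorm : ‖y - p‖ < 1 := by
    have h1 : y - p = p * (x - p) * p := by
      simp [hydef, mul_sub, sub_mul, hp_idem.eq]
    calc ‖y - p‖ = ‖p * (x - p) * p‖ := by rw [h1]
      _ ≤ ‖p * (x - p)‖ * ‖p‖ := norm_mul_le _ _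
      _ ≤ (‖p‖ * ‖x - p‖) * ‖p‖ := by gcongr; exact norm_mul_le _ _
      _ ≤ (1 * ‖x - p‖) * 1 := by gcongr
      _ = ‖x - p‖ := by ring
      _ < 1 := hx
  -- move to the unitization
  set B := Unitization ℂ A
  set P : B := (p : B) with hPdef
  set Y : B := (y : B) with hYdef
  have hP_sa : IsSelfAdjoint P := by
    rw [IsSelfAdjoint, hPdef, ← Unitization.inr_star, hp_sa.star_eq]
  have hY_sa : IsSelfAdjoint Y := by
    rw [IsSelfAdjoint, hYdef, ← Unitization.inr_star, hy_sa.star_eq]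
  set u : B := 1 - P + Y with hudef
  have hu_sa : IsSelfAdjoint u := ((IsSelfAdjoint.one B).sub hP_sa).add hY_sa
  have hPP : P * P = P := by rw [hPdef, ← Unitization.inr_mul, hp_idem.eq]
  have hPY : P * Y = Y := by rw [hPdef, hYdef, ← Unitization.inr_mul, hyp]
  have hYP : Y * P = Y := by rw [hPdef, hYdef, ← Unitization.inr_mul, hpy]
  have hPu : P * u = Y := by
    rw [hudef, mul_add, mul_sub, mul_one, hPP, hPY, sub_self, zero_add]
  have hUp : u * P = Y := by
    rw [hudef, add_mul, sub_mul, one_mul, hPP, hYP, sub_self, zero_add]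
  have hCm : Commute P u := hPu.trans hUp.symm
  have hu1 : ‖u - 1‖ < 1 := by
    have : u - 1 = ((y - p : A) : B) := by
      rw [hudef, Unitization.inr_sub, ← hYdef, ← hPdef]; abel
    rw [this, Unitization.norm_inr]; exact hnorm
  have hspec : ∀ t ∈ spectrum ℝ u, 0 < t := by
    intro t ht
    have hmem : t - 1 ∈ spectrum ℝ (u - algebraMap ℝ B 1) := by
      rw [← spectrum.sub_singleton_eq]
      exact Set.sub_mem_sub ht rfl
    have h4 : ‖t - 1‖ ≤ ‖u - algebraMap ℝ B 1‖ := spectrum.norm_le_norm_of_mem hmem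
    rw [map_one] at h4
    have h5 : |t - 1| < 1 := lt_of_le_of_lt h4 hu1
    rw [abs_lt] at h5
    linarith [h5.1]
  -- the inverse square root of u
  set v : B := cfc (fun t : ℝ => (Real.sqrt t)⁻¹) u with hvdef
  have hv_sa : IsSelfAdjoint v := cfc_predicate _ u
  have hcomm : Commute P v := commute_cfc_aux hCm _
  have hfc : ContinuousOn (fun t : ℝ => (Real.sqrt t)⁻¹) (spectrum ℝ u) :=
    Real.continuous_sqrt.continuousOn.inv₀ fun t ht => ne_of_gt (Real.sqrt_pos.mpr (hspec t ht))
  have hvuv : v * (u * v) = 1 := by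
    have key : cfc (fun t : ℝ => (Real.sqrt t)⁻¹ * (t * (Real.sqrt t)⁻¹)) u
        = v * (u * v) := by
      rw [hvdef, cfc_mul (fun t : ℝ => (Real.sqrt t)⁻¹) (fun t : ℝ => t * (Real.sqrt t)⁻¹) u hfc
          ((continuousOn_id' _).mul hfc),
        cfc_mul _ _ u (continuousOn_id' _) hfc, cfc_id' ℝ u]
    rw [← key, cfc_congr (g := fun _ : ℝ => 1) (fun t ht => ?_), cfc_const_one ℝ u]
    have h0 : 0 < t := hspec t ht
    field_simp
    exact (Real.sq_sqrt h0.le).symm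
  -- the witness in B
  set w : B := v * P with hwdef
  have hw : w * Y * star w = P := by
    rw [hwdef, star_mul, hv_sa.star_eq, hP_sa.star_eq]
    calc v * P * Y * (P * v) = v * (P * Y) * (P * v) := by rw [mul_assoc v P Y]
      _ = v * Y * (P * v) := by rw [hPY]
      _ = v * (Y * P) * v := by rw [mul_assoc, mul_assoc, mul_assoc]
      _ = v * Y * v := by rw [hYP]
      _ = v * (u * P) * v := by rw [hUp]
      _ = v * (u * (P * v)) := by rw [mul_assoc, mul_assoc]
      _ = v * (u * (v * P)) := by rw [hcomm.eq]
      _ = v * (u * v) * P := by noncomm_ring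
      _ = P := by rw [hvuv, one_mul]
  -- pull back to A
  have hfst : w.fst = 0 := by
    rw [hwdef, Unitization.fst_mul, hPdef, Unitization.fst_inr, mul_zero]
  set d : A := w.snd with hddef
  have hdw : (d : B) = w := by
    conv_rhs => rw [← Unitization.inl_fst_add_inr_snd_eq w]
    rw [hfst, Unitization.inl_zero, zero_add]
  have hd : d * y * star d = p := by
    apply Unitization.inr_injective (R := ℂ)
    rw [Unitization.inr_mul, Unitization.inr_mul, Unitization.inr_star, hdw]
    exact hw
  refine ⟨d * (p * c), ?_⟩
  have hy2 : (p * c) * b * star (p * c) = y := by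
    rw [hydef, hxdef, star_mul, hp_sa.star_eq]
    noncomm_ring
  calc d * (p * c) * b * star (d * (p * c))
      = d * ((p * c) * b * star (p * c)) * star d := by
        rw [star_mul]; noncomm_ring
    _ = d * y * star d := by rw [hy2]
    _ = p := hd

/-- Cuntz subequivalence of elements of a (not necessarily unital) C*-algebra:
`x ≾ y` iff there is a sequence `d n` with `d n * y * (d n)* → x` in norm. -/
def CuntzBelow {A : Type*} [NonUnitalCStarAlgebra A] (x y : A) : Prop :=
  ∃ d : ℕ → A, Filter.Tendsto (fun n => d n * y * star (d n)) Filter.atTop (nhds x)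

/-- Cuntz equivalence of elements of a C*-algebra. -/
def CuntzEquiv {A : Type*} [NonUnitalCStarAlgebra A] (x y : A) : Prop :=
  CuntzBelow x y ∧ CuntzBelow y x

theorem stmt2 {A : Type*} [NonUnitalCStarAlgebra A] [PartialOrder A] [StarOrderedRing A]
    (a p : A) (ha : 0 ≤ a)
    (hp_sa : IsSelfAdjoint p) (hp_idem : IsIdempotentElem p)
    (h : CuntzEquiv p a) :
    ∃ ε : ℝ, 0 < ε ∧ CuntzEquiv (cfcₙ (fun s : ℝ => max (s - ε) 0) a) a := by
  obtain ⟨h1, h2⟩ := h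
  obtain ⟨e, he⟩ := h1
  have ha_sa : IsSelfAdjoint a := IsSelfAdjoint.of_nonneg ha
  -- a single element conjugating a close to p
  obtain ⟨N, hN⟩ := Metric.tendsto_atTop.mp he 1 one_pos
  have hN1 : ‖e N * a * star (e N) - p‖ < 1 := by
    rw [← dist_eq_norm]; exact hN N le_rfl
  obtain ⟨c₁, hc₁⟩ := cornerL p a (e N) hp_sa hp_idem ha_sa hN1
  set ε : ℝ := (2 * (1 + ‖c₁‖ ^ 2))⁻¹ with hεdef
  have hεpos : 0 < ε := by positivity
  set bb := cfcₙ (fun s : ℝ => max (s - ε) 0) a with hbbdef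
  have hb_sa : IsSelfAdjoint bb := cfcₙ_predicate _ a
  have hquas : ∀ s ∈ quasispectrum ℝ a, 0 ≤ s := quasispectrum_nonneg_of_nonneg a ha
  -- bb is ε-close to a
  have hdiff : ‖bb - a‖ ≤ ε := by
    have hcont : ContinuousOn (fun s : ℝ => max (s - ε) 0) (quasispectrum ℝ a) :=
      ((continuous_id.sub continuous_const).max continuous_const).continuousOn
    have h0 : max (0 - ε) 0 = 0 := by simp [hεpos.le]
    have key : bb - a = cfcₙ (fun s : ℝ => max (s - ε) 0 - s) a := by
      rw [hbbdef, cfcₙ_sub _ _ a hcont (by simpa using h0) (continuousOn_id' _) rfl,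
        cfcₙ_id' ℝ a]
    rw [key]
    apply norm_cfcₙ_le
    intro s hs
    have hs0 := hquas s hs
    rw [Real.norm_eq_abs, abs_le]
    rcases le_total s ε with hh | hh
    · rw [max_eq_right (by linarith)]; constructor <;> linarith
    · rw [max_eq_left (by linarith)]; constructor <;> linarith
  -- hence c₁ conjugates bb close to p
  have hlt : ‖c₁ * bb * star c₁ - p‖ < 1 := by
    have hrw : c₁ * bb * star c₁ - p = c₁ * (bb - a) * star c₁ := by
      rw [← hc₁]; noncomm_ring
    rw [hrw]
    have hb1 : ‖c₁ * (bb - a) * star c₁‖ ≤ ‖c₁‖ * ε * ‖c₁‖ := by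
      calc ‖c₁ * (bb - a) * star c₁‖ ≤ ‖c₁ * (bb - a)‖ * ‖star c₁‖ := norm_mul_le _ _
        _ ≤ (‖c₁‖ * ‖bb - a‖) * ‖star c₁‖ := by gcongr; exact norm_mul_le _ _
        _ = ‖c₁‖ * ‖bb - a‖ * ‖c₁‖ := by rw [norm_star]
        _ ≤ ‖c₁‖ * ε * ‖c₁‖ := by gcongr
    refine lt_of_le_of_lt hb1 ?_
    have hc : (0:ℝ) ≤ ‖c₁‖ := norm_nonneg c₁
    calc ‖c₁‖ * ε * ‖c₁‖ = (‖c₁‖ * ‖c₁‖) * (2 * (1 + ‖c₁‖ ^ 2))⁻¹ := by rw [hεdef]; ring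
      _ = (‖c₁‖ * ‖c₁‖) / (2 * (1 + ‖c₁‖ ^ 2)) := by rw [← div_eq_mul_inv]
      _ < 1 := by rw [div_lt_one (by positivity)]; nlinarith
  obtain ⟨v, hv⟩ := cornerL p bb c₁ hp_sa hp_idem hb_sa hlt
  refine ⟨ε, hεpos, ?_, ?_⟩
  · -- bb ≾ a via an exact conjugation
    set g : ℝ → ℝ := fun s => Real.sqrt (max (s - ε) 0 / max s ε) with hgdef
    have hden : ∀ s : ℝ, max s ε ≠ 0 := fun s =>
      ne_of_gt (lt_of_lt_of_le hεpos (le_max_right s ε))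
    have hgc : Continuous g := Real.continuous_sqrt.comp
      ((((continuous_id.sub continuous_const).max continuous_const).div
        (continuous_id.max continuous_const) hden))
    have hg0 : g 0 = 0 := by
      simp [hgdef, max_eq_right hεpos.le, max_eq_right (neg_nonpos.mpr hεpos.le), zero_sub]
    set z := cfcₙ g a with hzdef
    have hz_sa : IsSelfAdjoint z := cfcₙ_predicate _ a
    have hzaz : z * a * star z = bb := by
      rw [hz_sa.star_eq, mul_assoc]
      have key : cfcₙ (fun s : ℝ => g s * (s * g s)) a = z * (a * z) := by
        rw [hzdef, cfcₙ_mul g (fun s : ℝ => s * g s) a hgc.continuousOn (by simpa using hg0)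
            ((continuousOn_id' _).mul hgc.continuousOn) (by simpa using hg0),
          cfcₙ_mul _ _ a (continuousOn_id' _) rfl hgc.continuousOn (by simpa using hg0),
          cfcₙ_id' ℝ a]
      rw [← key, hbbdef]
      apply cfcₙ_congr
      intro s hs
      have hs0 := hquas s hs
      show g s * (s * g s) = max (s - ε) 0
      have harg : 0 ≤ max (s - ε) 0 / max s ε := by positivity
      have hsq : g s * g s = max (s - ε) 0 / max s ε := Real.mul_self_sqrt harg
      rcases le_total s ε with hh | hh
      · have hm : max (s - ε) 0 = 0 := max_eq_right (by linarith)
        have hgs : g s = 0 := by simp [hgdef, hm]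
        rw [hm, hgs]; ring
      · have hsε : max s ε = s := max_eq_left hh
        rw [max_eq_left (by linarith)] at hsq ⊢
        rw [hsε] at hsq
        have hs' : s ≠ 0 := by intro h'; rw [h'] at hh; linarith
        field_simp at hsq ⊢
        nlinarith [hsq]
    exact ⟨fun _ => z, by rw [show (fun _ : ℕ => z * a * star z) = fun _ : ℕ => bb from
      funext fun _ => hzaz]; exact tendsto_const_nhds⟩
  · -- a ≾ bb
    obtain ⟨dd, hdd⟩ := h2
    refine ⟨fun n => dd n * v, ?_⟩
    have heq : (fun n => (dd n * v) * bb * star (dd n * v))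
        = fun n => dd n * p * star (dd n) := by
      funext n
      calc (dd n * v) * bb * star (dd n * v)
          = dd n * (v * bb * star v) * star (dd n) := by rw [star_mul]; noncomm_ring
        _ = dd n * p * star (dd n) := by rw [hv]
    rw [heq]
    exact hdd
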